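/- For any σ-finite measure space (S, μ) and any integrable F on S × S, the cut norm of F equals zero if and only if F = 0 almost everywhere with respect to μ × μ. -/

import Mathlib

open MeasureTheory Filter Topology

noncomputable def cutNorm {S : Type*} [MeasurableSpace S] (μ : Measure S)
    (F : S × S → ℝ) : ℝ :=
  ⨆ TU : {TU : Set S × Set S // MeasurableSet TU.1 ∧ MeasurableSet TU.2},
    |∫ p in TU.1.1 ×ˢ TU.1.2, F p ∂(μ.prod μ)|

theorem cutNorm_eq_zero_iff {S : Type*} [MeasurableSpace S] (μ : Measure S) [SigmaFinite μ]
    (F : S × S → ℝ) (hF : Integrable F (μ.prod μ)) :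
    cutNorm μ F = 0 ↔ F =ᵐ[μ.prod μ] 0 := by
  set ν := μ.prod μ with hν
  constructor
  · intro h
    -- boundedness of the family
    have hbdd : BddAbove (Set.range fun TU :
        {TU : Set S × Set S // MeasurableSet TU.1 ∧ MeasurableSet TU.2} =>
        |∫ p in TU.1.1 ×ˢ TU.1.2, F p ∂ν|) := by
      refine ⟨∫ p, |F p| ∂ν, ?_⟩
      rintro _ ⟨TU, rfl⟩
      calc |∫ p in TU.1.1 ×ˢ TU.1.2, F p ∂ν| ≤ ∫ p in TU.1.1 ×ˢ TU.1.2, |F p| ∂ν := by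
            simpa [Real.norm_eq_abs] using
              norm_integral_le_integral_norm (μ := ν.restrict (TU.1.1 ×ˢ TU.1.2)) F
        _ ≤ ∫ p, |F p| ∂ν :=
            setIntegral_le_integral hF.abs (Filter.Eventually.of_forall fun p => abs_nonneg _)
    have hrect : ∀ T U : Set S, MeasurableSet T → MeasurableSet U →
        ∫ p in T ×ˢ U, F p ∂ν = 0 := by
      intro T U hT hU
      have h1 : |∫ p in T ×ˢ U, F p ∂ν| ≤ cutNorm μ F :=
        le_ciSup hbdd ⟨(T, U), hT, hU⟩
      rw [h] at h1
      exact abs_eq_zero.mp (le_antisymm h1 (abs_nonneg _))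
    -- positive and negative part measures
    set νp := ν.withDensity fun p => ENNReal.ofReal (F p) with hνp
    set νm := ν.withDensity fun p => ENNReal.ofReal (-F p) with hνm
    have hmeas : AEMeasurable F ν := hF.aemeasurable
    have hfinp : ∀ (G : S × S → ℝ), AEMeasurable G ν → HasFiniteIntegral G ν →
        IsFiniteMeasure (ν.withDensity fun p => ENNReal.ofReal (G p)) := by
      intro G hG hGf
      refine ⟨?_⟩
      rw [withDensity_apply _ MeasurableSet.univ, Measure.restrict_univ]
      calc ∫⁻ p, ENNReal.ofReal (G p) ∂ν ≤ ∫⁻ p, ‖G p‖₊ ∂ν := by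
            refine lintegral_mono fun p => ?_
            rw [← enorm_eq_nnnorm, ← ofReal_norm_eq_enorm]
            exact ENNReal.ofReal_le_ofReal (le_abs_self _)
        _ < ⊤ := hGf
    have instp : IsFiniteMeasure νp := hfinp F hmeas hF.hasFiniteIntegral
    have instm : IsFiniteMeasure νm := hfinp (fun p => -F p) hmeas.neg hF.neg.hasFiniteIntegral
    -- key formula for set integrals
    have key : ∀ s : Set (S × S), MeasurableSet s →
        ∫ p in s, F p ∂ν = (νp s).toReal - (νm s).toReal := by
      intro s hs
      rw [integral_eq_lintegral_pos_part_sub_lintegral_neg_part hF.integrableOn,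
        hνp, hνm, withDensity_apply _ hs, withDensity_apply _ hs]
    have hagree : ∀ s : Set (S × S), MeasurableSet s → ∫ p in s, F p ∂ν = 0 → νp s = νm s := by
      intro s hs h0
      rw [key s hs] at h0
      exact (ENNReal.toReal_eq_toReal_iff' (measure_ne_top νp s) (measure_ne_top νm s)).mp
        (by linarith)
    have heq : νp = νm := by
      refine ext_of_generate_finite _ generateFrom_prod.symm isPiSystem_prod ?_ ?_
      · rintro _ ⟨T, hT, U, hU, rfl⟩
        exact hagree _ (hT.prod hU) (hrect T U hT hU)
      · have : (Set.univ : Set (S × S)) = Set.univ ×ˢ Set.univ := by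
          simp
        rw [this]
        exact hagree _ (MeasurableSet.univ.prod MeasurableSet.univ)
          (hrect _ _ MeasurableSet.univ MeasurableSet.univ)
    refine hF.ae_eq_zero_of_forall_setIntegral_eq_zero fun s hs _ => ?_
    rw [key s hs, heq, sub_self]
  · intro h
    have hall : ∀ TU : {TU : Set S × Set S // MeasurableSet TU.1 ∧ MeasurableSet TU.2},
        |∫ p in TU.1.1 ×ˢ TU.1.2, F p ∂ν| = 0 := by
      intro TU
      rw [integral_eq_zero_of_ae (ae_restrict_of_ae h), abs_zero]
    have : Nonempty {TU : Set S × Set S // MeasurableSet TU.1 ∧ MeasurableSet TU.2} :=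
      ⟨⟨(∅, ∅), MeasurableSet.empty, MeasurableSet.empty⟩⟩
    unfold cutNorm
    rw [← hν]
    simp only [hall, ciSup_const]
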